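/- The IBDTW cost lower bounds the minimal 1-stress over warping paths: if for each pair (i, j) the entry C_{ij} is the constrained L1 DTW distance between row i of the distance matrix of X and row j of the distance matrix of Y (constrained to warping paths through (i, j)), then (1/2)·min over warping paths W of Σ_{(i,j) ∈ W} C_{ij} is at most min over warping paths W of S_1(X, Y, W), where S_1(X, Y, W) = Σ over unordered pairs (x_i, y_j), (x', y') ∈ W of |d_X(x_i, x') − d_Y(y_j, y')|. -/

import Mathlib

/-- A valid step of a warping path: advance by (0,1), (1,0), or (1,1). -/
def WPStep (c c' : ℕ × ℕ) : Prop :=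
  c' = (c.1, c.2 + 1) ∨ c' = (c.1 + 1, c.2) ∨ c' = (c.1 + 1, c.2 + 1)

/-- A warping path from `(a, b)` to `(M, N)`: a nonempty sequence of index pairs starting at
`(a, b)`, ending at `(M, N)`, with consecutive differences in {(0,1), (1,0), (1,1)}. -/
def IsWarpingPathFromTo (a b M N : ℕ) (w : List (ℕ × ℕ)) : Prop :=
  w ≠ [] ∧ w.head? = some (a, b) ∧ w.getLast? = some (M, N) ∧ List.Chain' WPStep w

/-- A warping path between `{1,...,M}` and `{1,...,N}`. -/
def IsWarpingPath (M N : ℕ) (w : List (ℕ × ℕ)) : Prop :=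
  IsWarpingPathFromTo 1 1 M N w

/-- The L1 DTW distance between real sequences `A` (length `M`) and `B` (length `N`),
constrained to warping paths containing the pair `(i, j)`. -/
noncomputable def ConstrainedDTW1 (A B : ℕ → ℝ) (M N i j : ℕ) : ℝ :=
  sInf {c | ∃ w : List (ℕ × ℕ), IsWarpingPath M N w ∧ (i, j) ∈ w ∧
    c = (w.map fun p => |A p.1 - B p.2|).sum}

/-- The 1-stress of a warping path `w` (sum over unordered pairs of distinct positions of
the path of the distance distortions). -/
noncomputable def OneStress {X Y : Type*} [PseudoMetricSpace X] [PseudoMetricSpace Y]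
    (x : ℕ → X) (y : ℕ → Y) (w : List (ℕ × ℕ)) : ℝ :=
  ∑ p ∈ (Finset.range w.length ×ˢ Finset.range w.length).filter (fun p => p.1 < p.2),
    |dist (x (w.getD p.1 (0, 0)).1) (x (w.getD p.2 (0, 0)).1) -
      dist (y (w.getD p.1 (0, 0)).2) (y (w.getD p.2 (0, 0)).2)|

lemma wp_cons {a b a' b' M N : ℕ} (h : WPStep (a, b) (a', b'))
    {w : List (ℕ × ℕ)} (hw : IsWarpingPathFromTo a' b' M N w) :
    IsWarpingPathFromTo a b M N ((a, b) :: w) := by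
  obtain ⟨hne, hhead, hlast, hchain⟩ := hw
  refine ⟨by simp, by simp, ?_, ?_⟩
  · cases w with
    | nil => exact absurd rfl hne
    | cons c t => rw [List.getLast?_cons_cons]; exact hlast
  · rw [List.Chain', List.isChain_cons]
    refine ⟨fun z hz => ?_, hchain⟩
    rw [hhead] at hz
    cases hz
    exact h

lemma exists_wp (m : ℕ) : ∀ n a b : ℕ, ∃ w, IsWarpingPathFromTo a b (a + m) (b + n) w := by
  induction m with
  | zero =>
    intro n
    induction n with
    | zero =>
      intro a b
      exact ⟨[(a, b)], by simp [IsWarpingPathFromTo, List.Chain', List.isChain_singleton]⟩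
    | succ n ih =>
      intro a b
      obtain ⟨w, hw⟩ := ih a (b + 1)
      refine ⟨(a, b) :: w, ?_⟩
      have h := wp_cons (a := a) (b := b) (a' := a) (b' := b + 1) (Or.inl rfl) hw
      have : b + 1 + n = b + (n + 1) := by omega
      rwa [this] at h
  | succ m ihm =>
    intro n a b
    obtain ⟨w, hw⟩ := ihm n (a + 1) b
    refine ⟨(a, b) :: w, ?_⟩
    have h := wp_cons (a := a) (b := b) (a' := a + 1) (b' := b) (Or.inr (Or.inl rfl)) hw
    have : a + 1 + m = a + (m + 1) := by omega
    rwa [this] at h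

lemma sum_map_getD {α : Type*} (w : List α) (d : α) (g : α → ℝ) :
    (w.map g).sum = ∑ k ∈ Finset.range w.length, g (w.getD k d) := by
  induction w with
  | nil => simp
  | cons a t ih =>
    rw [List.map_cons, List.sum_cons, List.length_cons, Finset.sum_range_succ']
    simp [ih, add_comm]

lemma double_sum_eq (n : ℕ) (f : ℕ → ℕ → ℝ) (hsymm : ∀ k l, f k l = f l k)
    (hdiag : ∀ k, f k k = 0) :
    ∑ k ∈ Finset.range n, ∑ l ∈ Finset.range n, f k l
      = 2 * ∑ p ∈ (Finset.range n ×ˢ Finset.range n).filter (fun p => p.1 < p.2),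
          f p.1 p.2 := by
  rw [← Finset.sum_product']
  rw [← Finset.sum_filter_add_sum_filter_not (Finset.range n ×ˢ Finset.range n)
    (fun p => p.1 < p.2) (fun p => f p.1 p.2)]
  have h1 : ∑ p ∈ (Finset.range n ×ˢ Finset.range n).filter (fun p => ¬ p.1 < p.2), f p.1 p.2
      = ∑ p ∈ (Finset.range n ×ˢ Finset.range n).filter (fun p => p.2 < p.1), f p.1 p.2 := by
    refine (Finset.sum_subset ?_ ?_).symm
    · intro p hp
      simp only [Finset.mem_filter] at hp ⊢
      exact ⟨hp.1, by omega⟩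
    · intro p hp hnp
      simp only [Finset.mem_filter] at hp hnp
      have : p.1 = p.2 := by
        by_contra hne
        exact hnp ⟨hp.1, by omega⟩
      rw [this, hdiag]
  have h2 : ∑ p ∈ (Finset.range n ×ˢ Finset.range n).filter (fun p => p.2 < p.1), f p.1 p.2
      = ∑ p ∈ (Finset.range n ×ˢ Finset.range n).filter (fun p => p.1 < p.2), f p.1 p.2 := by
    refine Finset.sum_nbij' (i := Prod.swap) (j := Prod.swap) ?_ ?_ ?_ ?_ ?_
    · intro p hp
      simp only [Finset.mem_filter, Finset.mem_product] at hp ⊢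
      exact ⟨⟨hp.1.2, hp.1.1⟩, hp.2⟩
    · intro p hp
      simp only [Finset.mem_filter, Finset.mem_product] at hp ⊢
      exact ⟨⟨hp.1.2, hp.1.1⟩, hp.2⟩
    · intro p _; simp
    · intro p _; simp
    · intro p _; exact hsymm p.1 p.2
  rw [h1, h2]; ring

/-- IBDTW lower bounds the minimal 1-stress over warping paths.  Here
`C i j` is the constrained L1 DTW between row `i` of the SSM of `X` and row `j` of the
SSM of `Y`. -/
theorem ibdtw_lower_bounds_one_stress {X Y : Type*} [PseudoMetricSpace X] [PseudoMetricSpace Y]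
    (x : ℕ → X) (y : ℕ → Y) (M N : ℕ) (hM : 1 ≤ M) (hN : 1 ≤ N)
    (C : ℕ → ℕ → ℝ)
    (hC : ∀ i j, C i j =
      ConstrainedDTW1 (fun k => dist (x i) (x k)) (fun l => dist (y j) (y l)) M N i j) :
    (1 / 2) * sInf {c | ∃ w : List (ℕ × ℕ), IsWarpingPath M N w ∧
        c = (w.map fun p => C p.1 p.2).sum} ≤
      sInf {s | ∃ w : List (ℕ × ℕ), IsWarpingPath M N w ∧ s = OneStress x y w} := by
  set S := {c | ∃ w : List (ℕ × ℕ), IsWarpingPath M N w ∧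
    c = (w.map fun p => C p.1 p.2).sum} with hS
  -- existence of a warping path
  obtain ⟨w0, hw0⟩ := exists_wp (M - 1) (N - 1) 1 1
  have hMN : 1 + (M - 1) = M ∧ 1 + (N - 1) = N := ⟨by omega, by omega⟩
  rw [hMN.1, hMN.2] at hw0
  -- each C i j is nonnegative
  have hCnn : ∀ i j, 0 ≤ C i j := by
    intro i j
    rw [hC]
    apply Real.sInf_nonneg
    rintro c ⟨w', _, _, rfl⟩
    apply List.sum_nonneg
    intro z hz
    simp only [List.mem_map] at hz
    obtain ⟨q, _, rfl⟩ := hz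
    positivity
  have hbdd : BddBelow S := by
    refine ⟨0, ?_⟩
    rintro c ⟨w', _, rfl⟩
    apply List.sum_nonneg
    intro z hz
    simp only [List.mem_map] at hz
    obtain ⟨q, _, rfl⟩ := hz
    exact hCnn q.1 q.2
  have step2 : ∀ w : List (ℕ × ℕ), IsWarpingPath M N w →
      (w.map fun p => C p.1 p.2).sum ≤ 2 * OneStress x y w := by
    intro w hw
    have h1 : (w.map fun p => C p.1 p.2).sum ≤
        (w.map fun p =>
          (w.map fun q => |dist (x p.1) (x q.1) - dist (y p.2) (y q.2)|).sum).sum := by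
      apply List.sum_le_sum
      intro p hp
      rw [hC p.1 p.2]
      apply csInf_le
      · refine ⟨0, ?_⟩
        rintro c ⟨w', _, _, rfl⟩
        apply List.sum_nonneg
        intro z hz
        simp only [List.mem_map] at hz
        obtain ⟨q, _, rfl⟩ := hz
        positivity
      · exact ⟨w, hw, by simpa using hp, rfl⟩
    have h2 : (w.map fun p =>
        (w.map fun q => |dist (x p.1) (x q.1) - dist (y p.2) (y q.2)|).sum).sum
        = 2 * OneStress x y w := by
      rw [sum_map_getD w ((0 : ℕ), (0 : ℕ))]
      have hinner : ∀ k ∈ Finset.range w.length,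
          (w.map fun q => |dist (x (w.getD k (0, 0)).1) (x q.1) -
            dist (y (w.getD k (0, 0)).2) (y q.2)|).sum
          = ∑ l ∈ Finset.range w.length,
              |dist (x (w.getD k (0, 0)).1) (x (w.getD l (0, 0)).1) -
                dist (y (w.getD k (0, 0)).2) (y (w.getD l (0, 0)).2)| := by
        intro k _
        exact sum_map_getD w ((0 : ℕ), (0 : ℕ)) _
      rw [Finset.sum_congr rfl hinner]
      rw [double_sum_eq w.length
        (fun k l => |dist (x (w.getD k (0, 0)).1) (x (w.getD l (0, 0)).1) -
          dist (y (w.getD k (0, 0)).2) (y (w.getD l (0, 0)).2)|)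
        (fun k l => by beta_reduce; rw [dist_comm (x (w.getD k (0,0)).1), dist_comm (y (w.getD k (0,0)).2)])
        (fun k => by simp)]
      rfl
    linarith
  refine le_csInf ⟨OneStress x y w0, w0, hw0, rfl⟩ ?_
  rintro t ⟨w, hw, rfl⟩
  have hmem : (w.map fun p => C p.1 p.2).sum ∈ S := ⟨w, hw, rfl⟩
  have h3 := csInf_le hbdd hmem
  have h4 := step2 w hw
  linarith
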